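/- The language {g(aⁿbⁿ) | n ≥ 1} of unranked terms with root g whose sequence of children is n copies of leaf a followed by n copies of leaf b is not recognizable by any hedge automaton, but is recognized by a hedge automaton extended with one collapsing transition over a finite language. -/

import Mathlib

/-- Unranked terms over an alphabet `α`: a node labeled by a symbol of `α`
with a hedge (finite list) of subterms. -/
inductive UTerm (α : Type) : Type
  | node : α → List (UTerm α) → UTerm α

/-- A hedge automaton: transitions `a(L) → q` with `L ⊆ Q*` a regular word language. -/
structure HA (α Q : Type) where
  final : Set Q
  trans : List (α × Language Q × Q)
  regular : ∀ r ∈ trans, r.2.1.IsRegular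

/-- Bottom-up reduction of a term to a state. -/
inductive HA.Reduce {α Q : Type} (A : HA α Q) : UTerm α → Q → Prop
  | node {a : α} {ts : List (UTerm α)} {qs : List Q} {L : Language Q} {q : Q} :
      (a, L, q) ∈ A.trans → qs ∈ L → ts.length = qs.length →
      (∀ p ∈ List.zip ts qs, A.Reduce p.1 p.2) →
      A.Reduce (UTerm.node a ts) q

/-- Language of terms accepted by a hedge automaton. -/
def HA.lang {α Q : Type} (A : HA α Q) : Set (UTerm α) :=
  { t | ∃ q ∈ A.final, A.Reduce t q }

/-- A set of terms is a hedge-automaton language. -/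
def IsHALang {α : Type} (L : Set (UTerm α)) : Prop :=
  ∃ (Q : Type) (_ : Fintype Q) (A : HA α Q), A.lang = L

/-- A hedge automaton extended with collapsing transitions `L → q`. -/
structure EHA (α Q : Type) where
  final : Set Q
  trans : List (α × Language Q × Q)
  regular : ∀ r ∈ trans, r.2.1.IsRegular
  collapse : List (Language Q × Q)

/-- A state viewed as a leaf of a mixed hedge over `Σ ∪ Q`. -/
def stLeaf {α Q : Type} (q : Q) : UTerm (α ⊕ Q) := UTerm.node (Sum.inr q) []

mutual
  def embedT {α Q : Type} : UTerm α → UTerm (α ⊕ Q)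
    | UTerm.node a ts => UTerm.node (Sum.inl a) (embedH ts)
  def embedH {α Q : Type} : List (UTerm α) → List (UTerm (α ⊕ Q))
    | [] => []
    | t :: ts => embedT t :: embedH ts
end

/-- Move relation of an extended HA on mixed hedges over `Σ ∪ Q`. -/
inductive EHA.Move {α Q : Type} (A : EHA α Q) :
    List (UTerm (α ⊕ Q)) → List (UTerm (α ⊕ Q)) → Prop
  | trans {a : α} {L : Language Q} {q : Q} {qs : List Q} :
      (a, L, q) ∈ A.trans → qs ∈ L →
      A.Move [UTerm.node (Sum.inl a) (qs.map stLeaf)] [stLeaf q]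
  | collapse {L : Language Q} {q : Q} {qs : List Q} :
      (L, q) ∈ A.collapse → qs ∈ L →
      A.Move (qs.map stLeaf) [stLeaf q]
  | context {u v h h' : List (UTerm (α ⊕ Q))} :
      A.Move h h' → A.Move (u ++ h ++ v) (u ++ h' ++ v)
  | under {f : α ⊕ Q} {h h' : List (UTerm (α ⊕ Q))} :
      A.Move h h' → A.Move [UTerm.node f h] [UTerm.node f h']

/-- Terms accepted by an extended HA. -/
def EHA.termLang {α Q : Type} (A : EHA α Q) : Set (UTerm α) :=
  { t | ∃ q ∈ A.final, Relation.ReflTransGen A.Move [embedT t] [stLeaf q] }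

/-- The alphabet `{g, a, b}` as `Fin 3` with `g = 0`, `a = 1`, `b = 2`;
the term `g(aⁿbⁿ)`. -/
def gab (n : ℕ) : UTerm (Fin 3) :=
  UTerm.node 0
    (List.replicate n (UTerm.node 1 []) ++ List.replicate n (UTerm.node 2 []))

/-! ### Auxiliary development -/

section Aux

/-- leaf `a` -/
def aT : UTerm (Fin 3) := UTerm.node 1 []
/-- leaf `b` -/
def bT : UTerm (Fin 3) := UTerm.node 2 []
/-- the hedge `aⁿbⁿ` -/
def hed (n : ℕ) : List (UTerm (Fin 3)) := List.replicate n aT ++ List.replicate n bT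

lemma gab_eq_hed (n : ℕ) : gab n = UTerm.node 0 (hed n) := rfl

def rootLabel : UTerm (Fin 3) → Fin 3
  | .node a _ => a

lemma zip_replicate_self {α β : Type} (c : α) : ∀ l : List β,
    List.zip (List.replicate l.length c) l = l.map (fun s => (c, s))
  | [] => rfl
  | s :: l => by
      simp [List.replicate_succ, zip_replicate_self c l]

lemma gab_inj_aux {m n k : ℕ}
    (h : (List.replicate m (1 : Fin 3) ++ List.replicate n 2)
        = List.replicate k 1 ++ List.replicate k 2) : m = k ∧ n = k := by
  constructor
  · have := congrArg (List.count 1) h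
    simpa [List.count_append, List.count_replicate] using this
  · have := congrArg (List.count 2) h
    simpa [List.count_append, List.count_replicate] using this

/-! #### Part 1 : not a hedge-automaton language -/

theorem gab_not_halang : ¬ IsHALang { t : UTerm (Fin 3) | ∃ n ≥ 1, t = gab n } := by
  classical
  rintro ⟨Q, fQ, A, hA⟩
  -- a uniform bound on the number of states of DFAs for the transition languages
  set f : {r : Fin 3 × Language Q × Q // r ∈ A.trans} → ℕ :=
    fun r => @Fintype.card (A.regular r.1 r.2).choose (A.regular r.1 r.2).choose_spec.choose
    with hf
  set N : ℕ := 1 + (A.trans.attach.map f).sum with hNdef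
  have hN1 : 1 ≤ N := by omega
  have hmem : gab N ∈ A.lang := by
    rw [hA]; exact ⟨N, hN1, rfl⟩
  obtain ⟨q, hqf, hred⟩ := hmem
  rw [gab_eq_hed] at hred
  cases hred with
  | @node _ _ qs L _ htr hqs hlen hch =>
  -- extract the DFA for this transition
  have hreg := A.regular _ htr
  set σ := hreg.choose with hσ
  letI instσ : Fintype σ := hreg.choose_spec.choose
  obtain ⟨M, hM⟩ : ∃ M : DFA Q σ, @DFA.accepts Q σ M = L := hreg.choose_spec.choose_spec
  have hcard_le : @Fintype.card σ instσ ≤ N := by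
    have h1 : f ⟨(0, L, q), htr⟩ ∈ A.trans.attach.map f :=
      List.mem_map_of_mem (f := f) (List.mem_attach _ _)
    have h2 := List.le_sum_of_mem h1
    have h3 : f ⟨(0, L, q), htr⟩ = @Fintype.card σ instσ := rfl
    omega
  have hql : qs.length = N + N := by
    have := hlen.symm
    simpa [hed] using this
  -- pumping
  have hacc : qs ∈ @DFA.accepts Q σ M := by rw [hM]; exact hqs
  obtain ⟨x, y, z, hxyz, hxylen, hyne, hpump⟩ :=
    @DFA.pumping_lemma Q σ M instσ qs hacc (by omega)
  have hw' : x ++ (y ++ y) ++ z ∈ L := by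
    rw [← hM]
    apply hpump
    show x ++ (y ++ y) ++ z ∈ ({x} * KStar.kstar {y} * {z} : Language Q)
    rw [Language.mem_mul]
    refine ⟨x ++ (y ++ y), ?_, z, rfl, by simp⟩
    rw [Language.mem_mul]
    refine ⟨x, rfl, y ++ y, ?_, rfl⟩
    have := Language.join_mem_kstar (l := ({y} : Language Q)) (L := [y, y])
      (by intro w hw; simp at hw; exact hw)
    simpa using this
  -- the children of `gab N` reduce pointwise
  have hzip : List.zip (List.replicate N aT ++ List.replicate N bT) qs
      = List.zip (List.replicate N aT) (qs.take N)
        ++ List.zip (List.replicate N bT) (qs.drop N) := by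
    conv_lhs => rw [← List.take_append_drop N qs]
    rw [List.zip_append (by simp [hql])]
  have htklen : (qs.take N).length = N := by simp [hql]
  have hdplen : (qs.drop N).length = N := by simp [hql]
  have hA_red : ∀ s ∈ qs.take N, A.Reduce aT s := by
    intro s hs
    have : (aT, s) ∈ List.zip (List.replicate N aT ++ List.replicate N bT) qs := by
      rw [hzip]
      apply List.mem_append_left
      have hz := zip_replicate_self aT (qs.take N)
      rw [htklen] at hz
      rw [hz]
      exact List.mem_map_of_mem hs
    exact hch _ this
  have hB_red : ∀ s ∈ qs.drop N, A.Reduce bT s := by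
    intro s hs
    have : (bT, s) ∈ List.zip (List.replicate N aT ++ List.replicate N bT) qs := by
      rw [hzip]
      apply List.mem_append_right
      have hz := zip_replicate_self bT (qs.drop N)
      rw [hdplen] at hz
      rw [hz]
      exact List.mem_map_of_mem hs
    exact hch _ this
  -- positions
  have hxylenN : x.length + y.length ≤ N := le_trans hxylen hcard_le
  set c : ℕ := N - (x.length + y.length) with hc
  have hzlen : x.length + y.length + z.length = N + N := by
    have := congrArg List.length hxyz
    simp at this
    omega
  have htake : qs.take N = (x ++ y) ++ z.take c := by
    rw [hxyz, List.take_append,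
      List.take_of_length_le (by simp; omega)]
    congr 1
    simp [hc]
  have hdrop : qs.drop N = z.drop c := by
    rw [hxyz, List.drop_append,
      List.drop_eq_nil_of_le (by simp; omega)]
    simp [hc]
  -- the pumped word and the pumped term
  set w1 : List Q := x ++ y ++ y ++ z.take c with hw1def
  set w2 : List Q := z.drop c with hw2def
  have hw1len : w1.length = N + y.length := by
    simp [hw1def, List.length_take]
    omega
  have hw2len : w2.length = N := by
    simp [hw2def]
    omega
  have hwmem : w1 ++ w2 ∈ L := by
    have : w1 ++ w2 = x ++ (y ++ y) ++ z := by
      simp [hw1def, hw2def, List.append_assoc]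
    rw [this]; exact hw'
  have hw1red : ∀ s ∈ w1, A.Reduce aT s := by
    intro s hs
    apply hA_red
    rw [htake]
    simp only [hw1def, List.mem_append] at hs ⊢
    tauto
  have hw2red : ∀ s ∈ w2, A.Reduce bT s := by
    intro s hs
    apply hB_red
    rw [hdrop]
    exact hs
  set m : ℕ := N + y.length with hm
  have hred' : A.Reduce (UTerm.node 0 (List.replicate m aT ++ List.replicate N bT)) q := by
    refine HA.Reduce.node htr hwmem (by simp [hw1len, hw2len]; try omega) ?_
    intro p hp
    rw [List.zip_append (by simp [hw1len])] at hp
    rcases List.mem_append.mp hp with hp | hp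
    · have hz := zip_replicate_self aT w1
      rw [hw1len] at hz
      rw [show m = N + y.length from rfl, hz] at hp
      obtain ⟨s, hs, rfl⟩ := List.mem_map.mp hp
      exact hw1red s hs
    · have hz := zip_replicate_self bT w2
      rw [hw2len] at hz
      rw [hz] at hp
      obtain ⟨s, hs, rfl⟩ := List.mem_map.mp hp
      exact hw2red s hs
  -- contradiction
  have hmem' : UTerm.node 0 (List.replicate m aT ++ List.replicate N bT) ∈ A.lang :=
    ⟨q, hqf, hred'⟩
  rw [hA] at hmem'
  obtain ⟨n, hn1, heq⟩ := hmem'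
  rw [gab_eq_hed] at heq
  have hlist : List.replicate m aT ++ List.replicate N bT = hed n := by
    injection heq
  have hlab := congrArg (List.map rootLabel) hlist
  simp only [hed, List.map_append, List.map_replicate] at hlab
  have hlab' : List.replicate m (1 : Fin 3) ++ List.replicate N 2
      = List.replicate n 1 ++ List.replicate n 2 := by
    simpa [rootLabel, aT, bT] using hlab
  obtain ⟨hmn, hNn⟩ := gab_inj_aux hlab'
  have : y.length = 0 := by omega
  exact hyne (List.eq_nil_of_length_eq_zero this)

/-! #### Part 2 : the extended hedge automaton -/

lemma mem_lang_singleton {α : Type} {x y : List α} : x ∈ ({y} : Language α) ↔ x = y :=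
  Iff.rfl

lemma mem_lang_pair {α : Type} {x y z : List α} :
    x ∈ ({y, z} : Language α) ↔ x = y ∨ x = z :=
  Iff.rfl

/-- DFA for the language `{[]}`. -/
def dfa1 : DFA (Fin 4) Bool := ⟨fun _ _ => false, true, {true}⟩

lemma dfa1_accepts : dfa1.accepts = ({[]} : Language (Fin 4)) := by
  have key : ∀ y : List (Fin 4), List.foldl (fun (_ : Bool) (_ : Fin 4) => false) false y
      = false := by
    intro y; induction y with
    | nil => rfl
    | cons c y ih => simpa using ih
  ext x
  simp only [DFA.mem_accepts, DFA.evalFrom, dfa1, mem_lang_singleton, Set.mem_singleton_iff]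
  cases x with
  | nil => simp
  | cons c y => simp [DFA.eval, DFA.evalFrom, key y]

/-- DFA for the language `{[0]}`. -/
def dfa0 : DFA (Fin 4) (Fin 3) :=
  ⟨fun s c => if s = 0 ∧ c = 0 then 1 else 2, 0, {1}⟩

lemma dfa0_ne0 : ∀ (y : List (Fin 4)) (s : Fin 3), s ≠ 0 →
    List.foldl dfa0.step s y = if y = [] then s else 2 := by
  intro y
  induction y with
  | nil => intro s _; rfl
  | cons d y ih =>
    intro s hs
    have hstep : dfa0.step s d = 2 := by
      simp [dfa0, hs]
    rw [List.foldl_cons, hstep, ih 2 (by decide)]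
    simp

lemma dfa0_accepts : dfa0.accepts = ({[0]} : Language (Fin 4)) := by
  ext x
  simp only [DFA.mem_accepts, DFA.evalFrom, mem_lang_singleton]
  show List.foldl dfa0.step dfa0.start x ∈ dfa0.accept ↔ x = [0]
  cases x with
  | nil => simp [dfa0]
  | cons c y =>
    rw [List.foldl_cons]
    by_cases hc : c = 0
    · subst hc
      have hstep : dfa0.step dfa0.start 0 = 1 := by decide
      rw [hstep, dfa0_ne0 y 1 (by decide)]
      cases y with
      | nil => simp [dfa0]
      | cons d z => simp [dfa0]
    · have hstep : dfa0.step dfa0.start c = 2 := by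
        simp [dfa0, hc]
      rw [hstep, dfa0_ne0 y 2 (by decide)]
      have h2 : (if y = [] then (2 : Fin 3) else 2) = 2 := by split <;> rfl
      rw [h2]
      constructor
      · intro hmem
        exfalso
        have : (2 : Fin 3) = 1 := hmem
        exact absurd this (by decide)
      · intro hme
        injection hme with h1 h2
        exact absurd h1 hc

/-- The collapsing language `{q_a q_b, q_a q q_b}` with `q = 0, q_a = 1, q_b = 2`. -/
def colL : Language (Fin 4) := {[1, 2], [1, 0, 2]}

/-- The extended hedge automaton recognizing `{g(aⁿbⁿ) | n ≥ 1}`: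
states `q = 0, q_a = 1, q_b = 2, q_f = 3`. -/
def Agab : EHA (Fin 3) (Fin 4) where
  final := {3}
  trans := [((1 : Fin 3), ({[]} : Language (Fin 4)), (1 : Fin 4)),
            ((2 : Fin 3), ({[]} : Language (Fin 4)), (2 : Fin 4)),
            ((0 : Fin 3), ({[0]} : Language (Fin 4)), (3 : Fin 4))]
  regular := by
    intro r hr
    simp only [List.mem_cons, List.not_mem_nil, or_false] at hr
    rcases hr with rfl | rfl | rfl
    · exact ⟨Bool, inferInstance, dfa1, dfa1_accepts⟩
    · exact ⟨Bool, inferInstance, dfa1, dfa1_accepts⟩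
    · exact ⟨Fin 3, inferInstance, dfa0, dfa0_accepts⟩
  collapse := [(colL, 0)]

/-- The hedges denoted by each state. -/
def langQ (q : Fin 4) : Set (List (UTerm (Fin 3))) :=
  if q = 0 then {h | ∃ n ≥ 1, h = hed n}
  else if q = 1 then {[aT]}
  else if q = 2 then {[bT]}
  else {h | ∃ n ≥ 1, h = [UTerm.node 0 (hed n)]}

/-- `DenH h hs` : the mixed hedge `h` can be concretized to the pure hedge `hs`. -/
inductive DenH : List (UTerm (Fin 3 ⊕ Fin 4)) → List (UTerm (Fin 3)) → Prop
  | nil : DenH [] []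
  | symb {a : Fin 3} {ts : List (UTerm (Fin 3 ⊕ Fin 4))} {hs : List (UTerm (Fin 3))}
      {rest : List (UTerm (Fin 3 ⊕ Fin 4))} {rest' : List (UTerm (Fin 3))} :
      DenH ts hs → DenH rest rest' →
      DenH (UTerm.node (Sum.inl a) ts :: rest) (UTerm.node a hs :: rest')
  | state {q : Fin 4} {hh : List (UTerm (Fin 3))}
      {rest : List (UTerm (Fin 3 ⊕ Fin 4))} {rest' : List (UTerm (Fin 3))} :
      hh ∈ langQ q → DenH rest rest' →
      DenH (UTerm.node (Sum.inr q) [] :: rest) (hh ++ rest')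

lemma denH_append : ∀ {x h1 y h2}, DenH x h1 → DenH y h2 → DenH (x ++ y) (h1 ++ h2) := by
  intro x h1 y h2 hx hy
  induction hx with
  | nil => simpa using hy
  | symb hts hrest ih1 ih2 =>
    simpa using DenH.symb hts ih2
  | state hm hrest ih =>
    simpa [List.append_assoc] using DenH.state hm ih

lemma denH_split : ∀ {x y : List (UTerm (Fin 3 ⊕ Fin 4))} {hs},
    DenH (x ++ y) hs → ∃ h1 h2, hs = h1 ++ h2 ∧ DenH x h1 ∧ DenH y h2 := by
  intro x
  induction x with
  | nil => intro y hs hd; exact ⟨[], hs, rfl, DenH.nil, hd⟩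
  | cons t x ih =>
    intro y hs hd
    cases hd with
    | symb hts hrest =>
      obtain ⟨h1, h2, rfl, d1, d2⟩ := ih hrest
      exact ⟨_ :: h1, h2, rfl, DenH.symb hts d1, d2⟩
    | state hm hrest =>
      obtain ⟨h1, h2, rfl, d1, d2⟩ := ih hrest
      exact ⟨_ ++ h1, h2, by simp [List.append_assoc], DenH.state hm d1, d2⟩

theorem den_embed : ∀ ts : List (UTerm (Fin 3)), DenH (embedH ts) ts
  | [] => by rw [embedH]; exact DenH.nil
  | (UTerm.node a cs) :: ts => by
      rw [embedH, embedT]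
      exact DenH.symb (den_embed cs) (den_embed ts)

lemma move_ne_nil : ∀ {h h'}, Agab.Move h h' → h ≠ [] := by
  intro h h' hm
  induction hm with
  | trans _ _ => simp
  | collapse htr hqs =>
    simp only [Agab, List.mem_cons, List.not_mem_nil, or_false, Prod.mk.injEq] at htr
    obtain ⟨rfl, rfl⟩ := htr
    rcases mem_lang_pair.mp hqs with rfl | rfl <;> simp
  | context _ ih =>
    intro hc
    simp only [List.append_eq_nil_iff] at hc
    exact ih hc.1.2
  | under _ _ => simp

lemma hed_succ (n : ℕ) : hed (n + 1) = aT :: (hed n ++ [bT]) := by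
  simp only [hed]
  rw [List.replicate_succ, List.replicate_succ' (n := n) (a := bT)]
  simp

lemma langQ0 : langQ 0 = {h | ∃ n ≥ 1, h = hed n} := rfl
lemma langQ1 : langQ 1 = {[aT]} := rfl
lemma langQ2 : langQ 2 = {[bT]} := rfl
lemma langQ3 : langQ 3 = {h | ∃ n ≥ 1, h = [UTerm.node 0 (hed n)]} := rfl

/-- Key invariant: moves preserve denotation. -/
lemma preserve : ∀ {h h'}, Agab.Move h h' → ∀ hs, DenH h hs → DenH h' hs := by
  intro h h' hm
  induction hm with
  | @trans a L q qs htr hqs =>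
    intro hs hd
    simp only [Agab, List.mem_cons, List.not_mem_nil, or_false, Prod.mk.injEq] at htr
    rcases htr with ⟨rfl, rfl, rfl⟩ | ⟨rfl, rfl, rfl⟩ | ⟨rfl, rfl, rfl⟩
    · -- a → q_a
      have hqs' : qs = [] := hqs
      subst hqs'
      simp only [List.map_nil] at hd
      cases hd with
      | symb hts hrest =>
        cases hts; cases hrest
        have : DenH [stLeaf 1] ([aT] ++ []) :=
          DenH.state (by rw [langQ1]; rfl) DenH.nil
        simpa [aT] using this
    · -- b → q_b
      have hqs' : qs = [] := hqs
      subst hqs'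
      simp only [List.map_nil] at hd
      cases hd with
      | symb hts hrest =>
        cases hts; cases hrest
        have : DenH [stLeaf 2] ([bT] ++ []) :=
          DenH.state (by rw [langQ2]; rfl) DenH.nil
        simpa [bT] using this
    · -- g(q) → q_f
      have hqs' : qs = [0] := hqs
      subst hqs'
      simp only [List.map_cons, List.map_nil, stLeaf] at hd
      cases hd with
      | symb hts hrest =>
        cases hrest
        cases hts with
        | state hm0 hrest0 =>
          cases hrest0
          rw [langQ0] at hm0
          obtain ⟨n, hn, rfl⟩ := hm0
          have : DenH [stLeaf 3] ([UTerm.node 0 (hed n)] ++ []) :=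
            DenH.state (by rw [langQ3]; exact ⟨n, hn, rfl⟩) DenH.nil
          simpa using this
  | @collapse L q qs htr hqs =>
    intro hs hd
    simp only [Agab, List.mem_cons, List.not_mem_nil, or_false, Prod.mk.injEq] at htr
    obtain ⟨rfl, rfl⟩ := htr
    rcases mem_lang_pair.mp hqs with rfl | rfl
    · -- q_a q_b → q
      simp only [List.map_cons, List.map_nil, stLeaf] at hd
      cases hd with
      | @state q1 hh1 rest1 rest1' h1 hrest1 =>
        have h1' : hh1 = [aT] := h1
        subst h1'
        cases hrest1 with
        | @state q2 hh2 rest2 rest2' h2 hrest2 =>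
          have h2' : hh2 = [bT] := h2
          subst h2'
          cases hrest2
          have : DenH [stLeaf 0] (hed 1 ++ []) :=
            DenH.state (by rw [langQ0]; exact ⟨1, le_refl 1, rfl⟩) DenH.nil
          simpa [hed] using this
    · -- q_a q q_b → q
      simp only [List.map_cons, List.map_nil, stLeaf] at hd
      cases hd with
      | @state q1 hh1 rest1 rest1' h1 hrest1 =>
        have h1' : hh1 = [aT] := h1
        subst h1'
        cases hrest1 with
        | @state q0 hh0 rest0 rest0' h0 hrest0 =>
          rw [langQ0] at h0
          obtain ⟨n, hn, rfl⟩ := h0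
          cases hrest0 with
          | @state q2 hh2 rest2 rest2' h2 hrest2 =>
            have h2' : hh2 = [bT] := h2
            subst h2'
            cases hrest2
            have : DenH [stLeaf 0] (hed (n + 1) ++ []) :=
              DenH.state (by rw [langQ0]; exact ⟨n + 1, by omega, rfl⟩) DenH.nil
            simpa [hed_succ, List.append_assoc] using this
  | @context u v hh hh' hmv ih =>
    intro hs hd
    obtain ⟨h12, h3, rfl, d12, d3⟩ := denH_split hd
    obtain ⟨h1, h2, rfl, d1, d2⟩ := denH_split d12
    exact denH_append (denH_append d1 (ih _ d2)) d3
  | @under f hh hh' hmv ih =>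
    intro hs hd
    cases f with
    | inl a =>
      cases hd with
      | symb hts hrest =>
        cases hrest
        exact DenH.symb (ih _ hts) DenH.nil
    | inr q =>
      cases hd with
      | state hm0 hrest0 =>
        exact absurd rfl (move_ne_nil hmv)

lemma preserve_rtg : ∀ {h h'}, Relation.ReflTransGen Agab.Move h h' →
    ∀ hs, DenH h hs → DenH h' hs := by
  intro h h' hr
  induction hr with
  | refl => exact fun hs hd => hd
  | tail _ hstep ih => exact fun hs hd => preserve hstep _ (ih _ hd)

/-! #### Completeness of `Agab` -/

lemma rtg_context {h h' : List (UTerm (Fin 3 ⊕ Fin 4))} (u v : List (UTerm (Fin 3 ⊕ Fin 4)))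
    (hr : Relation.ReflTransGen Agab.Move h h') :
    Relation.ReflTransGen Agab.Move (u ++ h ++ v) (u ++ h' ++ v) := by
  induction hr with
  | refl => exact Relation.ReflTransGen.refl
  | tail _ hstep ih => exact ih.tail (EHA.Move.context hstep)

lemma rtg_under {h h' : List (UTerm (Fin 3 ⊕ Fin 4))} (f : Fin 3 ⊕ Fin 4)
    (hr : Relation.ReflTransGen Agab.Move h h') :
    Relation.ReflTransGen Agab.Move [UTerm.node f h] [UTerm.node f h'] := by
  induction hr with
  | refl => exact Relation.ReflTransGen.refl
  | tail _ hstep ih => exact ih.tail (EHA.Move.under hstep)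

/-- `a` reduces to `q_a = 1`. -/
lemma mvA : Agab.Move [UTerm.node (Sum.inl (1 : Fin 3)) []] [stLeaf 1] := by
  have := EHA.Move.trans (A := Agab) (qs := ([] : List (Fin 4)))
    (show ((1 : Fin 3), ({[]} : Language (Fin 4)), (1 : Fin 4)) ∈ Agab.trans by
      simp [Agab])
    (show ([] : List (Fin 4)) ∈ ({[]} : Language (Fin 4)) from rfl)
  simpa using this

/-- `b` reduces to `q_b = 2`. -/
lemma mvB : Agab.Move [UTerm.node (Sum.inl (2 : Fin 3)) []] [stLeaf 2] := by
  have := EHA.Move.trans (A := Agab) (qs := ([] : List (Fin 4)))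
    (show ((2 : Fin 3), ({[]} : Language (Fin 4)), (2 : Fin 4)) ∈ Agab.trans by
      simp [Agab])
    (show ([] : List (Fin 4)) ∈ ({[]} : Language (Fin 4)) from rfl)
  simpa using this

/-- `g(q)` reduces to `q_f = 3`. -/
lemma mvG : Agab.Move [UTerm.node (Sum.inl (0 : Fin 3)) [stLeaf 0]] [stLeaf 3] := by
  have := EHA.Move.trans (A := Agab) (qs := ([0] : List (Fin 4)))
    (show ((0 : Fin 3), ({[0]} : Language (Fin 4)), (3 : Fin 4)) ∈ Agab.trans by
      simp [Agab])
    (show ([0] : List (Fin 4)) ∈ ({[0]} : Language (Fin 4)) from rfl)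
  simpa using this

lemma mvC1 : Agab.Move [stLeaf 1, stLeaf 2] [stLeaf 0] := by
  have := EHA.Move.collapse (A := Agab) (qs := ([1, 2] : List (Fin 4)))
    (show (colL, (0 : Fin 4)) ∈ Agab.collapse by simp [Agab])
    (show ([1, 2] : List (Fin 4)) ∈ colL from mem_lang_pair.mpr (Or.inl rfl))
  simpa using this

lemma mvC2 : Agab.Move [stLeaf 1, stLeaf 0, stLeaf 2] [stLeaf 0] := by
  have := EHA.Move.collapse (A := Agab) (qs := ([1, 0, 2] : List (Fin 4)))
    (show (colL, (0 : Fin 4)) ∈ Agab.collapse by simp [Agab])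
    (show ([1, 0, 2] : List (Fin 4)) ∈ colL from mem_lang_pair.mpr (Or.inr rfl))
  simpa using this

/-- abbreviations for the embedded leaves -/
def nA : UTerm (Fin 3 ⊕ Fin 4) := UTerm.node (Sum.inl 1) []
def nB : UTerm (Fin 3 ⊕ Fin 4) := UTerm.node (Sum.inl 2) []

lemma toQ : ∀ n, 1 ≤ n → Relation.ReflTransGen Agab.Move
    (List.replicate n nA ++ List.replicate n nB) [stLeaf 0] := by
  intro n hn
  induction n, hn using Nat.le_induction with
  | base =>
    have s1 : Agab.Move [nA, nB] [stLeaf 1, nB] := by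
      simpa [nA] using EHA.Move.context (u := []) (v := [nB]) mvA
    have s2 : Agab.Move [stLeaf 1, nB] [stLeaf 1, stLeaf 2] := by
      simpa [nB] using EHA.Move.context (u := [stLeaf 1]) (v := []) mvB
    have : Relation.ReflTransGen Agab.Move [nA, nB] [stLeaf 0] :=
      Relation.ReflTransGen.head s1 (Relation.ReflTransGen.head s2
        (Relation.ReflTransGen.single mvC1))
    simpa using this
  | succ n hn ih =>
    have e : List.replicate (n + 1) nA ++ List.replicate (n + 1) nB
        = [nA] ++ (List.replicate n nA ++ List.replicate n nB) ++ [nB] := by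
      rw [List.replicate_succ, List.replicate_succ' (n := n) (a := nB)]
      simp [List.append_assoc]
    rw [e]
    have t1 : Relation.ReflTransGen Agab.Move
        ([nA] ++ (List.replicate n nA ++ List.replicate n nB) ++ [nB])
        [nA, stLeaf 0, nB] := by
      simpa using rtg_context [nA] [nB] ih
    have t2 : Agab.Move [nA, stLeaf 0, nB] [stLeaf 1, stLeaf 0, nB] := by
      simpa [nA] using EHA.Move.context (u := []) (v := [stLeaf 0, nB]) mvA
    have t3 : Agab.Move [stLeaf 1, stLeaf 0, nB] [stLeaf 1, stLeaf 0, stLeaf 2] := by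
      simpa [nB] using EHA.Move.context (u := [stLeaf 1, stLeaf 0]) (v := []) mvB
    exact ((t1.tail t2).tail t3).tail mvC2

lemma embedH_map : ∀ l : List (UTerm (Fin 3)),
    embedH l = l.map (embedT (Q := Fin 4)) := by
  intro l
  induction l with
  | nil => rw [embedH]; rfl
  | cons t ts ih => rw [embedH, ih]; rfl

lemma embedT_aT : embedT (Q := Fin 4) aT = nA := by
  show embedT (UTerm.node 1 []) = nA
  rw [embedT, embedH]
  rfl

lemma embedT_bT : embedT (Q := Fin 4) bT = nB := by
  show embedT (UTerm.node 2 []) = nB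
  rw [embedT, embedH]
  rfl

lemma embedH_hed (n : ℕ) :
    embedH (hed n) = List.replicate n nA ++ List.replicate n nB := by
  rw [embedH_map]
  simp only [hed, List.map_append, List.map_replicate, embedT_aT, embedT_bT]

/-- The languages coincide. -/
lemma Agab_lang : Agab.termLang = { t : UTerm (Fin 3) | ∃ n ≥ 1, t = gab n } := by
  ext t
  constructor
  · rintro ⟨q, hq, hrtg⟩
    have hq3 : q = 3 := hq
    subst hq3
    have hde : DenH [embedT t] [t] := by
      have h1 := den_embed [t]
      rwa [embedH, embedH] at h1
    have hd3 : DenH [stLeaf 3] [t] := preserve_rtg hrtg _ hde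
    have h2 : ∀ ws, DenH [stLeaf 3] ws → ∃ n ≥ 1, ws = [gab n] := by
      intro ws hws
      cases hws with
      | @state q0 hh0 rest0 rest0' hm0 hrest0 =>
        cases hrest0
        rw [langQ3] at hm0
        obtain ⟨n, hn, rfl⟩ := hm0
        exact ⟨n, hn, by simp [gab_eq_hed]⟩
    obtain ⟨n, hn, he⟩ := h2 [t] hd3
    have ht : t = gab n := by
      simpa using he
    exact ⟨n, hn, ht⟩
  · rintro ⟨n, hn, rfl⟩
    refine ⟨3, rfl, ?_⟩
    have e3 : embedT (Q := Fin 4) (gab n)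
        = UTerm.node (Sum.inl 0) (embedH (hed n)) := by
      rw [gab_eq_hed, embedT]
    rw [e3, embedH_hed]
    have r1 : Relation.ReflTransGen Agab.Move
        [UTerm.node (Sum.inl (0 : Fin 3)) (List.replicate n nA ++ List.replicate n nB)]
        [UTerm.node (Sum.inl 0) [stLeaf 0]] :=
      rtg_under _ (toQ n hn)
    exact r1.tail mvG

end Aux

/-- `{g(aⁿbⁿ) | n ≥ 1}` is not a hedge-automaton language, but it
is recognized by a hedge automaton extended with a single collapsing transition
over a finite language. -/
theorem gab_not_ha_but_eha :
    ¬ IsHALang { t : UTerm (Fin 3) | ∃ n ≥ 1, t = gab n } ∧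
    ∃ (Q : Type) (_ : Fintype Q) (A : EHA (Fin 3) Q) (L : Language Q) (q : Q),
      A.collapse = [(L, q)] ∧ L.Finite ∧
      A.termLang = { t : UTerm (Fin 3) | ∃ n ≥ 1, t = gab n } := by
  refine ⟨gab_not_halang, Fin 4, inferInstance, Agab, colL, 0, rfl, ?_, Agab_lang⟩
  exact (Set.finite_singleton _).insert _
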